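/- Let f : ℂ → ℂ be entire of exponential type τ > 0, even, with f|ℝ Lebesgue integrable, and let m ≥ 1 be an integer. Then the limit lim_{ε→0⁺} [ ∫_ε^∞ f(x)/x^{2m} dx − Σ_{j=0}^{m−1} (f^{(2j)}(0)/((2j)!·(2m−2j−1))) · ε^{2j−2m+1} ] exists and is finite; i.e. the Hadamard finite part of the divergent integral ∫₀^∞ f(x)/x^{2m} dx exists. -/

import Mathlib

open MeasureTheory Filter Nat

private lemma sum_range_two_mul {M : Type*} [AddCommMonoid M] (n : ℕ) (f : ℕ → M) :
    ∑ i ∈ Finset.range (2 * n), f i = ∑ i ∈ Finset.range n, (f (2 * i) + f (2 * i + 1)) := by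
  induction n with
  | zero => simp
  | succ n ih =>
    rw [Finset.sum_range_succ, ← ih, show 2 * (n + 1) = (2 * n + 1) + 1 by ring,
      Finset.sum_range_succ, Finset.sum_range_succ, add_assoc]

private lemma odd_iteratedDeriv_zero (f : ℂ → ℂ) (heven : ∀ z : ℂ, f (-z) = f z) (k : ℕ) :
    iteratedDeriv (2 * k + 1) f 0 = 0 := by
  have h := iteratedDeriv_comp_neg (2 * k + 1) f 0
  have h2 : (fun x : ℂ => f (-x)) = f := funext heven
  rw [h2, neg_zero, Odd.neg_one_pow ⟨k, by ring⟩, neg_one_smul] at h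
  linear_combination h / 2

private lemma coeff_eq (f : ℂ → ℂ) (p : FormalMultilinearSeries ℂ ℂ ℂ)
    (hp : HasFPowerSeriesAt f p 0) (n : ℕ) :
    p.coeff n = iteratedDeriv n f 0 / n ! := by
  obtain ⟨r, hr⟩ := hp
  have h := hr.factorial_smul (1 : ℂ) n
  rw [FormalMultilinearSeries.apply_eq_pow_smul_coeff, one_pow, one_smul] at h
  rw [iteratedDeriv_eq_iteratedFDeriv, ← h]
  simp [nsmul_eq_mul]
  rw [mul_comm, mul_div_assoc, div_self (by exact_mod_cast n.factorial_ne_zero), mul_one]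

/-- Existence of the Hadamard finite part of the divergent integral `∫₀^∞ f(x)/x^{2m} dx`
for an even entire function `f` of exponential type `τ > 0` integrable on `ℝ`. -/
theorem hadamard_finite_part_exists
    (f : ℂ → ℂ) (τ : ℝ) (hτ : 0 < τ)
    (hf : Differentiable ℂ f)
    (htype : ∀ ε > 0, ∃ C > 0, ∀ z : ℂ, ‖f z‖ ≤ C * Real.exp ((τ + ε) * ‖z‖))
    (heven : ∀ z : ℂ, f (-z) = f z)
    (hint : Integrable (fun x : ℝ => f x))
    (m : ℕ) (hm : 1 ≤ m) :
    ∃ FP : ℂ,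
      Tendsto
        (fun ε : ℝ =>
          (∫ x in Set.Ioi ε, f x / (x : ℂ) ^ (2 * m)) -
            ∑ j ∈ Finset.range m,
              (iteratedDeriv (2 * j) f 0 /
                  (((2 * j)! : ℂ) * ((2 * m - 2 * j - 1 : ℕ) : ℂ))) *
                ((ε : ℂ) ^ (2 * (j : ℤ) - 2 * (m : ℤ) + 1)))
        (nhdsWithin 0 (Set.Ioi 0)) (nhds FP) := by
  obtain ⟨p, hp⟩ := hf.analyticAt 0
  set c : ℕ → ℂ := fun k => iteratedDeriv k f 0 / k ! with hc_def
  have hc : ∀ k, p.coeff k = c k := fun k => coeff_eq f p hp k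
  have hodd : ∀ k, c (2 * k + 1) = 0 := by
    intro k; simp [hc_def, odd_iteratedDeriv_zero f heven k]
  set g : ℝ → ℂ := fun x => f x - ∑ j ∈ Finset.range m, c (2 * j) * (x : ℂ) ^ (2 * j)
    with hg_def
  set h : ℝ → ℂ := fun x => g x / (x : ℂ) ^ (2 * m) with hh_def
  -- Step A : big-O bound for g near 0
  have hOg : (fun x : ℝ => g x) =O[nhds (0 : ℝ)] fun x => |x| ^ (2 * m) := by
    have h1 := hp.isBigO_sub_partialSum_pow (2 * m)
    have h2 : Tendsto (fun x : ℝ => (x : ℂ)) (nhds 0) (nhds 0) := by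
      simpa using Complex.continuous_ofReal.tendsto 0
    have h3 := h1.comp_tendsto h2
    refine (h3.congr ?_ ?_)
    · intro x
      simp only [Function.comp_apply, zero_add]
      congr 1
      unfold FormalMultilinearSeries.partialSum
      rw [sum_range_two_mul]
      congr 1; funext j
      rw [FormalMultilinearSeries.apply_eq_pow_smul_coeff,
        FormalMultilinearSeries.apply_eq_pow_smul_coeff, hc, hc, hodd, smul_zero, add_zero,
        smul_eq_mul, mul_comm]
    · intro x
      simp [Function.comp_apply, Complex.norm_real]
  -- Step B : integrability of h on Ioc 0 1
  have hg_cont : Continuous g := by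
    apply (hf.continuous.comp Complex.continuous_ofReal).sub
    continuity
  have hh_meas : Measurable h := by
    apply hg_cont.measurable.div
    exact (Complex.measurable_ofReal.pow_const (2 * m))
  have hh_int : IntegrableOn h (Set.Ioc 0 1) := by
    obtain ⟨C, hC⟩ := hOg.bound
    rw [Metric.eventually_nhds_iff] at hC
    obtain ⟨δ, hδ0, hδ⟩ := hC
    obtain ⟨B, hB⟩ := (isCompact_Icc (a := (0:ℝ)) (b := 1)).exists_bound_of_continuousOn
      hg_cont.continuousOn
    have hB0 : 0 ≤ B := le_trans (norm_nonneg _) (hB 0 ⟨le_refl _, zero_le_one⟩)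
    refine Integrable.mono' (g := fun _ => max C (B / (δ/2) ^ (2*m)))
      (integrableOn_const measure_Ioc_lt_top.ne) hh_meas.aestronglyMeasurable ?_
    rw [ae_restrict_iff' measurableSet_Ioc]
    filter_upwards with x hx

    have hx0 : 0 < x := hx.1
    have hnorm : ‖h x‖ = ‖g x‖ / x ^ (2*m) := by
      rw [hh_def]; simp only
      rw [norm_div, norm_pow, Complex.norm_real, Real.norm_eq_abs, abs_of_pos hx0]
    rw [hnorm]
    rcases lt_or_ge x (δ/2) with hxδ | hxδ
    · refine le_trans ?_ (le_max_left _ _)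
      have hbound := hδ (y := x) (by rw [Real.dist_eq, sub_zero, abs_of_pos hx0]; linarith)
      rw [Real.norm_eq_abs, abs_of_nonneg (pow_nonneg (abs_nonneg _) _),
        abs_of_pos hx0] at hbound
      rw [div_le_iff₀ (by positivity)]
      calc ‖g x‖ ≤ C * x ^ (2*m) := hbound
        _ = C * x ^ (2*m) := rfl
    · refine le_trans ?_ (le_max_right _ _)
      exact div_le_div₀ hB0 (hB x ⟨hx0.le, hx.2⟩) (by positivity)
        (pow_le_pow_left₀ (by positivity) hxδ _)
  -- Step C : integrability of f x / x^(2m) on Ioi a, a > 0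
  have hfm : Measurable fun x : ℝ => f x / (x:ℂ) ^ (2*m) :=
    (hf.continuous.comp Complex.continuous_ofReal).measurable.div
      (Complex.measurable_ofReal.pow_const _)
  have hfi : ∀ a : ℝ, 0 < a → IntegrableOn (fun x : ℝ => f x / (x:ℂ) ^ (2*m)) (Set.Ioi a) := by
    intro a ha
    refine Integrable.mono' ((hint.norm.const_mul ((a ^ (2*m))⁻¹)).integrableOn)
      hfm.aestronglyMeasurable ?_
    rw [ae_restrict_iff' measurableSet_Ioi]
    filter_upwards with x hx

    have hx0 : 0 < x := ha.trans hx
    rw [norm_div, norm_pow, Complex.norm_real, Real.norm_eq_abs, abs_of_pos hx0,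
      inv_mul_eq_div]
    exact div_le_div₀ (norm_nonneg _) le_rfl (pow_pos ha _)
      (pow_le_pow_left₀ ha.le hx.le _)
  -- monomial integrals
  have hmono : ∀ ε : ℝ, ε ∈ Set.Ioo (0:ℝ) 1 → ∀ j : ℕ, j < m →
      ∫ x in Set.Ioc ε 1, ((x:ℂ) ^ (2*(j:ℤ) - 2*(m:ℤ))) =
        (((1 - ε ^ (2*(j:ℤ) - 2*(m:ℤ) + 1)) / (2*(j:ℤ) - 2*(m:ℤ) + 1) : ℝ) : ℂ) := by
    intro ε hε j hj
    rw [← intervalIntegral.integral_of_le hε.2.le]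
    rw [intervalIntegral.integral_congr
      (g := fun x : ℝ => ((x ^ (2*(j:ℤ) - 2*(m:ℤ)) : ℝ) : ℂ))
      (fun x _ => (Complex.ofReal_zpow x _).symm)]
    rw [intervalIntegral.integral_ofReal]
    rw [integral_zpow (Or.inr ⟨by omega, by
      rw [Set.uIcc_of_le hε.2.le]; rintro ⟨h0, -⟩; linarith [hε.1]⟩)]
    rw [one_zpow]
    norm_num
  -- decomposition of the integral over Ioc ε 1
  have hdecomp : ∀ ε : ℝ, ε ∈ Set.Ioo (0:ℝ) 1 →
      ∫ x in Set.Ioc ε 1, f x / (x:ℂ) ^ (2*m) =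
        (∫ x in Set.Ioc ε 1, h x) +
          ∑ j ∈ Finset.range m, c (2*j) *
            (((1 - ε ^ (2*(j:ℤ) - 2*(m:ℤ) + 1)) / (2*(j:ℤ) - 2*(m:ℤ) + 1) : ℝ) : ℂ) := by
    intro ε hε
    have hmz : ∀ j : ℕ, IntegrableOn (fun x : ℝ => (x:ℂ) ^ (2*(j:ℤ) - 2*(m:ℤ)))
        (Set.Ioc ε 1) := by
      intro j
      refine (ContinuousOn.integrableOn_Icc ?_).mono_set Set.Ioc_subset_Icc_self
      refine ContinuousOn.zpow₀ Complex.continuous_ofReal.continuousOn _ ?_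
      intro x hx
      exact Or.inl (by exact_mod_cast ne_of_gt (lt_of_lt_of_le hε.1 hx.1))
    have heq : Set.EqOn (fun x : ℝ => f x / (x:ℂ) ^ (2*m))
        (fun x : ℝ => h x + ∑ j ∈ Finset.range m,
          c (2*j) * (x:ℂ) ^ (2*(j:ℤ) - 2*(m:ℤ))) (Set.Ioc ε 1) := by
      intro x hx
      have hx0 : (x:ℂ) ≠ 0 := by exact_mod_cast ne_of_gt (hε.1.trans hx.1)
      have hterm : ∀ j ∈ Finset.range m,
          c (2*j) * (x:ℂ) ^ (2*j) / (x:ℂ) ^ (2*m)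
            = c (2*j) * (x:ℂ) ^ (2*(j:ℤ) - 2*(m:ℤ)) := by
        intro j _
        rw [mul_div_assoc]
        congr 1
        rw [show (2*(j:ℤ) - 2*(m:ℤ)) = ((2*j:ℕ):ℤ) - ((2*m:ℕ):ℤ) by push_cast; ring,
          zpow_sub₀ hx0, zpow_natCast, zpow_natCast]
      show f x / (x:ℂ) ^ (2*m) = (f x - ∑ j ∈ Finset.range m, c (2*j) * (x:ℂ) ^ (2*j))
          / (x:ℂ) ^ (2*m) + _
      rw [sub_div, Finset.sum_div, Finset.sum_congr rfl hterm, sub_add_cancel]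
    rw [setIntegral_congr_fun measurableSet_Ioc heq,
      integral_add (hh_int.mono_set (Set.Ioc_subset_Ioc_left hε.1.le))
        (integrable_finset_sum _ fun j _ => (hmz j).const_mul _),
      integral_finset_sum _ fun j _ => (hmz j).const_mul _]
    congr 1
    refine Finset.sum_congr rfl fun j hj => ?_
    rw [MeasureTheory.integral_const_mul, hmono ε hε j (Finset.mem_range.mp hj)]
  set K : ℂ := (∫ x in Set.Ioi (1:ℝ), f x / (x:ℂ) ^ (2*m)) +
      ∑ j ∈ Finset.range m, c (2*j) / ((2*(j:ℤ) - 2*(m:ℤ) + 1 : ℤ) : ℂ) with hK_def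
  have key : ∀ ε : ℝ, ε ∈ Set.Ioo (0:ℝ) 1 →
      (∫ x in Set.Ioi ε, f x / (x:ℂ) ^ (2*m)) -
        (∑ j ∈ Finset.range m,
          (iteratedDeriv (2*j) f 0 / (((2*j)! : ℂ) * ((2*m - 2*j - 1 : ℕ):ℂ))) *
            ((ε:ℂ) ^ (2*(j:ℤ) - 2*(m:ℤ) + 1)))
      = (∫ x in Set.Ioc ε 1, h x) + K := by
    intro ε hε
    have hsplit : ∫ x in Set.Ioi ε, f x / (x:ℂ) ^ (2*m) =
        (∫ x in Set.Ioc ε 1, f x / (x:ℂ) ^ (2*m)) +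
          ∫ x in Set.Ioi (1:ℝ), f x / (x:ℂ) ^ (2*m) := by
      rw [← setIntegral_union (Set.Ioc_disjoint_Ioi le_rfl) measurableSet_Ioi
        ((hfi ε hε.1).mono_set Set.Ioc_subset_Ioi_self) (hfi 1 one_pos),
        Set.Ioc_union_Ioi_eq_Ioi hε.2.le]
    rw [hsplit, hdecomp ε hε, hK_def]
    have hterm : ∀ j ∈ Finset.range m,
        c (2*j) * (((1 - ε ^ (2*(j:ℤ) - 2*(m:ℤ) + 1)) / (2*(j:ℤ) - 2*(m:ℤ) + 1) : ℝ) : ℂ) -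
          (iteratedDeriv (2*j) f 0 / (((2*j)! : ℂ) * ((2*m - 2*j - 1 : ℕ):ℂ))) *
            ((ε:ℂ) ^ (2*(j:ℤ) - 2*(m:ℤ) + 1))
        = c (2*j) / ((2*(j:ℤ) - 2*(m:ℤ) + 1 : ℤ) : ℂ) := by
      intro j hj
      have hjm : j < m := Finset.mem_range.mp hj
      have hQne : (2*(j:ℤ) - 2*(m:ℤ) + 1 : ℤ) ≠ 0 := by omega
      have hQC : ((2*(j:ℤ) - 2*(m:ℤ) + 1 : ℤ) : ℂ) ≠ 0 := Int.cast_ne_zero.mpr hQne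
      have hN : ((2*m - 2*j - 1 : ℕ):ℂ) = -((2*(j:ℤ) - 2*(m:ℤ) + 1 : ℤ) : ℂ) := by
        have h1 : ((2*m - 2*j - 1 : ℕ):ℤ) = -(2*(j:ℤ) - 2*(m:ℤ) + 1) := by omega
        calc ((2*m - 2*j - 1 : ℕ):ℂ) = (((2*m - 2*j - 1 : ℕ):ℤ):ℂ) := by norm_cast
          _ = -((2*(j:ℤ) - 2*(m:ℤ) + 1 : ℤ) : ℂ) := by rw [h1]; push_cast; ring
      have hcj : iteratedDeriv (2*j) f 0 / (((2*j)! : ℂ) * ((2*m - 2*j - 1 : ℕ):ℂ))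
          = c (2*j) / ((2*m - 2*j - 1 : ℕ):ℂ) := by
        rw [hc_def, div_div]
      have hcast : (((1 - ε ^ (2*(j:ℤ) - 2*(m:ℤ) + 1)) / (2*(j:ℤ) - 2*(m:ℤ) + 1) : ℝ) : ℂ)
          = (1 - (ε:ℂ) ^ (2*(j:ℤ) - 2*(m:ℤ) + 1)) / ((2*(j:ℤ) - 2*(m:ℤ) + 1 : ℤ) : ℂ) := by
        push_cast [Complex.ofReal_zpow]
        ring
      rw [hcj, hN, hcast, div_neg]
      ring
    rw [← Finset.sum_congr rfl hterm, Finset.sum_sub_distrib]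
    ring
  -- the limit of the regular part
  have hE : Tendsto (fun ε : ℝ => ∫ x in Set.Ioc ε 1, h x) (nhdsWithin 0 (Set.Ioi 0))
      (nhds (∫ x in Set.Ioc (0:ℝ) 1, h x)) := by
    have hmain := MeasureTheory.tendsto_integral_filter_of_dominated_convergence
      (μ := volume) (F := fun (ε : ℝ) (x : ℝ) => (Set.Ioc ε 1).indicator h x)
      (f := (Set.Ioc (0:ℝ) 1).indicator h)
      (l := nhdsWithin 0 (Set.Ioi 0))
      (bound := (Set.Ioc (0:ℝ) 1).indicator fun x => ‖h x‖)
      (Eventually.of_forall fun ε =>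
        (hh_meas.indicator measurableSet_Ioc).aestronglyMeasurable)
      ?_ ?_ ?_
    · simpa [integral_indicator measurableSet_Ioc] using hmain
    · filter_upwards [self_mem_nhdsWithin] with ε hε
      filter_upwards with x
      by_cases hx : x ∈ Set.Ioc ε 1
      · have hx' : x ∈ Set.Ioc (0:ℝ) 1 := ⟨lt_trans hε hx.1, hx.2⟩
        rw [Set.indicator_of_mem hx, Set.indicator_of_mem hx']
      · rw [Set.indicator_of_notMem hx, norm_zero]
        exact Set.indicator_apply_nonneg fun _ => norm_nonneg _
    · exact (integrable_indicator_iff measurableSet_Ioc).2 hh_int.norm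
    · refine Eventually.of_forall fun x => ?_
      by_cases hx : x ∈ Set.Ioc (0:ℝ) 1
      · rw [Set.indicator_of_mem hx]
        refine tendsto_const_nhds.congr' ?_
        filter_upwards [nhdsWithin_le_nhds (Iio_mem_nhds hx.1)] with ε hε
        rw [Set.indicator_of_mem (Set.mem_Ioc.mpr ⟨hε, hx.2⟩)]
      · rw [Set.indicator_of_notMem hx]
        refine tendsto_const_nhds.congr' ?_
        filter_upwards [self_mem_nhdsWithin] with ε hε
        rw [Set.indicator_of_notMem fun hmem => hx ⟨lt_trans hε hmem.1, hmem.2⟩]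
  refine ⟨(∫ x in Set.Ioc (0:ℝ) 1, h x) + K, ?_⟩
  refine Tendsto.congr' ?_ (hE.add_const K)
  filter_upwards [Ioo_mem_nhdsGT_of_mem (Set.mem_Ico.mpr ⟨le_refl (0:ℝ), one_pos⟩)]
    with ε hε
  exact (key ε hε).symm
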